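/- Let u : (0,∞) → V be measurable with v weak solution data such that the differential inequality (d/dt)|w(t)|² + (νN^{2γ}/(2C₁²) − (2/ν)‖u(t)‖²)|w(t)|² ≤ (2/ν)‖f(t)−g(t)‖²_{V'} + (νN^{2γ}/C₁²)‖R_N w(t)‖²_{L²} holds a.e., where |w(t)|² is absolutely continuous and nonnegative, ‖f(t)−g(t)‖_{V'} → 0 and ‖R_N w(t)‖_{L²} → 0 as t → ∞, limsup_{t→∞}(1/T)∫_t^{t+T}‖u‖²dτ < ∞ for some fixed T > 0, and N^{2γ} > (4C₁²/ν²) limsup_{t→∞}(1/T)∫_t^{t+T}‖u(τ)‖²dτ. Then lim_{t→∞}|w(t)| = 0. -/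

import Mathlib

open MeasureTheory Filter intervalIntegral Set

namespace DetProj

lemma eq_zero_of_abs_le_mul {d C : ℝ} (h : ∀ ε : ℝ, 0 < ε → ε ≤ 1 → |d| ≤ C * ε) : d = 0 := by
  by_contra hd
  have h0 : 0 < |d| := abs_pos.2 hd
  have hC : 0 < C := by
    have := h 1 one_pos le_rfl
    nlinarith
  have hε : 0 < min 1 (|d| / (2 * C)) := lt_min one_pos (by positivity)
  have h1 := h _ hε (min_le_left _ _)
  have h2 : C * min 1 (|d| / (2 * C)) ≤ C * (|d| / (2 * C)) :=
    mul_le_mul_of_nonneg_left (min_le_right _ _) hC.le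
  have h3 : C * (|d| / (2 * C)) = |d| / 2 := by field_simp
  nlinarith

lemma abs_exp_sub_exp_le {a b M : ℝ} (ha : |a| ≤ M) (hb : |b| ≤ M) :
    |Real.exp a - Real.exp b| ≤ Real.exp M * |a - b| := by
  wlog hab : b ≤ a generalizing a b
  · rw [abs_sub_comm, abs_sub_comm a b]; exact this hb ha (le_of_not_ge hab)
  rw [abs_of_nonneg (sub_nonneg.2 (Real.exp_le_exp.2 hab)), abs_of_nonneg (sub_nonneg.2 hab)]
  have h1 : b - a + 1 ≤ Real.exp (b - a) := Real.add_one_le_exp _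
  have h2 : Real.exp (b - a) = Real.exp b / Real.exp a := Real.exp_sub b a
  have hea : 0 < Real.exp a := Real.exp_pos a
  have heb : 0 < Real.exp b := Real.exp_pos b
  have h3 : Real.exp a - Real.exp b ≤ (a - b) * Real.exp a := by
    rw [h2] at h1
    have h5 := (le_div_iff₀ hea).1 h1
    nlinarith
  have h4 : Real.exp a ≤ Real.exp M := Real.exp_le_exp.2 (le_trans (le_abs_self a) ha)
  nlinarith

lemma primitive_abs_le {f : ℝ → ℝ} {s t : ℝ} (hst : s ≤ t)
    (hf : IntervalIntegrable f volume s t) {x : ℝ} (hx : x ∈ Icc s t) :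
    |∫ y in s..x, f y| ≤ ∫ y in s..t, |f y| := by
  calc |∫ y in s..x, f y| ≤ ∫ y in s..x, |f y| := abs_integral_le_integral_abs hx.1
    _ ≤ ∫ y in s..t, |f y| :=
      integral_mono_interval le_rfl hx.1 hx.2 (ae_of_all _ fun y => abs_nonneg _) hf.abs

lemma integral_mul_le_of_bound {f v : ℝ → ℝ} {s t C : ℝ} (hst : s ≤ t)
    (hf : IntervalIntegrable f volume s t) (hv : ContinuousOn v (Icc s t))
    (hC : ∀ x ∈ Icc s t, |v x| ≤ C) :
    |∫ x in s..t, f x * v x| ≤ C * ∫ x in s..t, |f x| := by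
  have hv' : ContinuousOn v (Set.uIcc s t) := by rwa [Set.uIcc_of_le hst]
  have h1 : IntervalIntegrable (fun x => f x * v x) volume s t := hf.mul_continuousOn hv'
  calc |∫ x in s..t, f x * v x| ≤ ∫ x in s..t, |f x * v x| := abs_integral_le_integral_abs hst
    _ ≤ ∫ x in s..t, |f x| * C := by
        refine integral_mono_on hst h1.abs (hf.abs.mul_const C) fun x hx => ?_
        rw [abs_mul]
        exact mul_le_mul_of_nonneg_left (hC x hx) (abs_nonneg _)
    _ = C * ∫ x in s..t, |f x| := by rw [intervalIntegral.integral_mul_const, mul_comm]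

lemma approx_continuous {f : ℝ → ℝ} {s t : ℝ} (hst : s ≤ t)
    (hf : IntervalIntegrable f volume s t) {ε : ℝ} (hε : 0 < ε) :
    ∃ g : ℝ → ℝ, Continuous g ∧ (∫ x in s..t, |f x - g x|) ≤ ε := by
  have hf' : Integrable ((Set.Ioc s t).indicator f) volume := by
    rw [integrable_indicator_iff measurableSet_Ioc]
    exact hf.1
  obtain ⟨g, -, hg1, hg2, hg3⟩ := hf'.exists_hasCompactSupport_integral_sub_le hε
  refine ⟨g, hg2, ?_⟩
  rw [intervalIntegral.integral_of_le hst]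
  have heq : EqOn (fun x => |f x - g x|) (fun x => ‖(Set.Ioc s t).indicator f x - g x‖)
      (Ioc s t) := fun x hx => by
    simp only [Set.indicator_of_mem hx, Real.norm_eq_abs]
  calc ∫ x in Ioc s t, |f x - g x|
      = ∫ x in Ioc s t, ‖(Set.Ioc s t).indicator f x - g x‖ :=
        setIntegral_congr_fun measurableSet_Ioc heq
    _ ≤ ∫ x, ‖(Set.Ioc s t).indicator f x - g x‖ :=
        setIntegral_le_integral (hf'.sub hg3).norm (ae_of_all _ fun x => norm_nonneg _)
    _ ≤ ε := hg1


lemma hasDeriv_primitive {φ : ℝ → ℝ} (hφ : Continuous φ) (s : ℝ) (x : ℝ) :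
    HasDerivAt (fun u => ∫ y in s..u, φ y) (φ x) x :=
  integral_hasDerivAt_right (hφ.intervalIntegrable s x)
    (hφ.stronglyMeasurableAtFilter _ _) hφ.continuousAt

lemma cont_primitive {φ : ℝ → ℝ} (hφ : Continuous φ) (s : ℝ) :
    Continuous (fun u => ∫ y in s..u, φ y) :=
  continuous_iff_continuousAt.2 fun x => (hasDeriv_primitive hφ s x).continuousAt

lemma prod_rule_continuous {φ ψ : ℝ → ℝ} (hφ : Continuous φ) (hψ : Continuous ψ)
    (s t : ℝ) : ∫ x in s..t, (φ x * (∫ y in s..x, ψ y) + ψ x * (∫ y in s..x, φ y)) =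
      (∫ y in s..t, φ y) * (∫ y in s..t, ψ y) := by
  have hΦc := cont_primitive hφ s
  have hΨc := cont_primitive hψ s
  have hder : ∀ x ∈ Set.uIcc s t, HasDerivAt
      (fun u => (∫ y in s..u, φ y) * (∫ y in s..u, ψ y))
      (φ x * (∫ y in s..x, ψ y) + ψ x * (∫ y in s..x, φ y)) x := by
    intro x _
    have := (hasDeriv_primitive hφ s x).mul (hasDeriv_primitive hψ s x)
    exact this.congr_deriv (by ring)
  have hint : IntervalIntegrable
      (fun x => φ x * (∫ y in s..x, ψ y) + ψ x * (∫ y in s..x, φ y)) volume s t :=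
    ((hφ.mul hΨc).add (hψ.mul hΦc)).intervalIntegrable s t
  have := integral_eq_sub_of_hasDerivAt hder hint
  rw [this]
  simp [integral_same]

lemma exp_primitive_eq {α : ℝ → ℝ} {s t : ℝ} (hst : s ≤ t)
    (hα : IntervalIntegrable α volume s t) :
    Real.exp (∫ u in s..t, α u) =
      1 + ∫ u in s..t, α u * Real.exp (∫ v in s..u, α v) := by
  set A : ℝ → ℝ := fun x => ∫ u in s..x, α u with hA
  set I : ℝ := ∫ u in s..t, |α u| with hI
  have hI0 : 0 ≤ I := integral_nonneg hst fun u _ => abs_nonneg _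
  set M : ℝ := I + 1 with hM
  have hAc : ContinuousOn A (Set.uIcc s t) := continuousOn_primitive_interval' hα left_mem_uIcc
  have hAc' : ContinuousOn A (Icc s t) := by rwa [Set.uIcc_of_le hst] at hAc
  have hAbd : ∀ x ∈ Icc s t, |A x| ≤ I := fun x hx => primitive_abs_le hst hα hx
  have hEc : ContinuousOn (fun x => Real.exp (A x)) (Icc s t) :=
    Real.continuous_exp.comp_continuousOn hAc'
  refine sub_eq_zero.1 ?_
  have key : ∀ ε : ℝ, 0 < ε → ε ≤ 1 →
      |Real.exp (A t) - (1 + ∫ u in s..t, α u * Real.exp (A u))|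
        ≤ (Real.exp M * (2 + I)) * ε := by
    intro ε hε hε1
    obtain ⟨g, hgc, hgerr⟩ := approx_continuous hst hα hε
    set B : ℝ → ℝ := fun x => ∫ u in s..x, g u with hB
    have hBc : Continuous B := cont_primitive hgc s
    have hsubα : ∀ x ∈ Icc s t, IntervalIntegrable α volume s x := fun x hx =>
      hα.mono_set (by rw [Set.uIcc_of_le hst, Set.uIcc_of_le hx.1]; exact Icc_subset_Icc le_rfl hx.2)
    have hAB : ∀ x ∈ Icc s t, |A x - B x| ≤ ε := by
      intro x hx
      have h1 : A x - B x = ∫ u in s..x, (α u - g u) :=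
        (integral_sub (hsubα x hx) (hgc.intervalIntegrable s x)).symm
      rw [h1]
      exact le_trans (primitive_abs_le hst (hα.sub (hgc.intervalIntegrable s t)) hx) hgerr
    have hBbd : ∀ x ∈ Icc s t, |B x| ≤ M := by
      intro x hx
      have := hAB x hx
      have := hAbd x hx
      have habs : |B x| ≤ |A x| + |A x - B x| := by
        calc |B x| = |A x - (A x - B x)| := by ring_nf
          _ ≤ |A x| + |A x - B x| := abs_sub _ _
      linarith
    have hAbd' : ∀ x ∈ Icc s t, |A x| ≤ M := fun x hx => by
      have := hAbd x hx; simp only [hM]; linarith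
    -- FTC for the approximation
    have hder : ∀ x ∈ Set.uIcc s t, HasDerivAt (fun u => Real.exp (B u))
        (g x * Real.exp (B x)) x := by
      intro x _
      have := (hasDeriv_primitive hgc s x).exp
      convert this using 1
      ring
    have hftc : ∫ x in s..t, g x * Real.exp (B x) = Real.exp (B t) - 1 := by
      rw [integral_eq_sub_of_hasDerivAt hder
        ((hgc.mul (Real.continuous_exp.comp hBc)).intervalIntegrable s t)]
      simp [hB, integral_same]
    -- error estimates
    have hts : t ∈ Icc s t := ⟨hst, le_rfl⟩
    have e1 : |Real.exp (A t) - Real.exp (B t)| ≤ Real.exp M * ε := by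
      calc |Real.exp (A t) - Real.exp (B t)| ≤ Real.exp M * |A t - B t| :=
            abs_exp_sub_exp_le (hAbd' t hts) (hBbd t hts)
        _ ≤ Real.exp M * ε := mul_le_mul_of_nonneg_left (hAB t hts) (Real.exp_pos M).le
    have hi1 : IntervalIntegrable (fun u => (g u - α u) * Real.exp (B u)) volume s t :=
      ((hgc.intervalIntegrable s t).sub hα).mul_continuousOn
        ((Real.continuous_exp.comp hBc).continuousOn)
    have hi2 : IntervalIntegrable (fun u => α u * (Real.exp (B u) - Real.exp (A u))) volume s t := by
      refine hα.mul_continuousOn (ContinuousOn.sub ((Real.continuous_exp.comp hBc).continuousOn) ?_)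
      exact Real.continuous_exp.comp_continuousOn hAc
    have hi3 : IntervalIntegrable (fun u => g u * Real.exp (B u)) volume s t :=
      (hgc.mul (Real.continuous_exp.comp hBc)).intervalIntegrable s t
    have hi4 : IntervalIntegrable (fun u => α u * Real.exp (A u)) volume s t :=
      hα.mul_continuousOn (Real.continuous_exp.comp_continuousOn hAc)
    have hsplit : (∫ u in s..t, g u * Real.exp (B u)) - ∫ u in s..t, α u * Real.exp (A u)
        = (∫ u in s..t, (g u - α u) * Real.exp (B u))
          + ∫ u in s..t, α u * (Real.exp (B u) - Real.exp (A u)) := by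
      rw [← integral_add hi1 hi2, ← integral_sub hi3 hi4]
      congr 1
      funext u
      ring
    have e2 : |(∫ u in s..t, (g u - α u) * Real.exp (B u))| ≤ Real.exp M * ε := by
      have hb : ∀ x ∈ Icc s t, |Real.exp (B x)| ≤ Real.exp M := fun x hx => by
        rw [abs_of_pos (Real.exp_pos _)]
        exact Real.exp_le_exp.2 (le_trans (le_abs_self _) (hBbd x hx))
      have := integral_mul_le_of_bound hst ((hgc.intervalIntegrable s t).sub hα)
        ((Real.continuous_exp.comp hBc).continuousOn) hb
      refine le_trans this ?_
      have : (∫ x in s..t, |g x - α x|) ≤ ε := by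
        refine le_trans (le_of_eq ?_) hgerr
        congr 1; funext x; rw [abs_sub_comm]
      nlinarith [Real.exp_pos M]
    have e3 : |∫ u in s..t, α u * (Real.exp (B u) - Real.exp (A u))| ≤ Real.exp M * ε * I := by
      have hb : ∀ x ∈ Icc s t, |Real.exp (B x) - Real.exp (A x)| ≤ Real.exp M * ε := fun x hx => by
        have h1 := abs_exp_sub_exp_le (hBbd x hx) (hAbd' x hx)
        have h2 : |B x - A x| ≤ ε := by rw [abs_sub_comm]; exact hAB x hx
        calc |Real.exp (B x) - Real.exp (A x)| ≤ Real.exp M * |B x - A x| := h1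
          _ ≤ Real.exp M * ε := mul_le_mul_of_nonneg_left h2 (Real.exp_pos M).le
      have hcont : ContinuousOn (fun x => Real.exp (B x) - Real.exp (A x)) (Icc s t) :=
        ((Real.continuous_exp.comp hBc).continuousOn).sub
          (Real.continuous_exp.comp_continuousOn hAc')
      exact integral_mul_le_of_bound hst hα hcont hb
    calc |Real.exp (A t) - (1 + ∫ u in s..t, α u * Real.exp (A u))|
        = |(Real.exp (A t) - Real.exp (B t))
            + ((∫ u in s..t, g u * Real.exp (B u)) - ∫ u in s..t, α u * Real.exp (A u))| := by
          rw [hftc]; ring_nf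
      _ ≤ |Real.exp (A t) - Real.exp (B t)|
            + |(∫ u in s..t, g u * Real.exp (B u)) - ∫ u in s..t, α u * Real.exp (A u)| :=
          abs_add_le _ _
      _ ≤ Real.exp M * ε + (Real.exp M * ε + Real.exp M * ε * I) := by
          rw [hsplit]
          have := abs_add_le (∫ u in s..t, (g u - α u) * Real.exp (B u))
            (∫ u in s..t, α u * (Real.exp (B u) - Real.exp (A u)))
          linarith
      _ = (Real.exp M * (2 + I)) * ε := by ring
  exact eq_zero_of_abs_le_mul key



lemma prod_rule {f g : ℝ → ℝ} {s t : ℝ} (hst : s ≤ t)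
    (hf : IntervalIntegrable f volume s t) (hg : IntervalIntegrable g volume s t) :
    ∫ x in s..t, (f x * (∫ y in s..x, g y) + g x * (∫ y in s..x, f y)) =
      (∫ y in s..t, f y) * (∫ y in s..t, g y) := by
  set F : ℝ → ℝ := fun x => ∫ y in s..x, f y with hFdef
  set G : ℝ → ℝ := fun x => ∫ y in s..x, g y with hGdef
  set If : ℝ := ∫ y in s..t, |f y| with hIf
  set Ig : ℝ := ∫ y in s..t, |g y| with hIg
  have hIf0 : 0 ≤ If := integral_nonneg hst fun u _ => abs_nonneg _
  have hIg0 : 0 ≤ Ig := integral_nonneg hst fun u _ => abs_nonneg _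
  have hFc : ContinuousOn F (Icc s t) := by
    have := continuousOn_primitive_interval' hf (left_mem_uIcc (a := s) (b := t))
    rwa [Set.uIcc_of_le hst] at this
  have hGc : ContinuousOn G (Icc s t) := by
    have := continuousOn_primitive_interval' hg (left_mem_uIcc (a := s) (b := t))
    rwa [Set.uIcc_of_le hst] at this
  have hFbd : ∀ x ∈ Icc s t, |F x| ≤ If := fun x hx => primitive_abs_le hst hf hx
  have hGbd : ∀ x ∈ Icc s t, |G x| ≤ Ig := fun x hx => primitive_abs_le hst hg hx
  have hts : t ∈ Icc s t := ⟨hst, le_rfl⟩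
  refine sub_eq_zero.1 (eq_zero_of_abs_le_mul (C := (3 * (If + Ig) + 6)) ?_)
  intro ε hε hε1
  obtain ⟨φ, hφc, hφerr⟩ := approx_continuous hst hf hε
  obtain ⟨ψ, hψc, hψerr⟩ := approx_continuous hst hg hε
  set Φ : ℝ → ℝ := fun x => ∫ y in s..x, φ y with hΦdef
  set Ψ : ℝ → ℝ := fun x => ∫ y in s..x, ψ y with hΨdef
  have hΦc : Continuous Φ := cont_primitive hφc s
  have hΨc : Continuous Ψ := cont_primitive hψc s
  have hsub : ∀ (u : ℝ → ℝ), IntervalIntegrable u volume s t →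
      ∀ x ∈ Icc s t, IntervalIntegrable u volume s x := fun u hu x hx =>
    hu.mono_set (by rw [Set.uIcc_of_le hst, Set.uIcc_of_le hx.1]; exact Icc_subset_Icc le_rfl hx.2)
  have hFΦ : ∀ x ∈ Icc s t, |F x - Φ x| ≤ ε := by
    intro x hx
    have h1 : F x - Φ x = ∫ y in s..x, (f y - φ y) :=
      (integral_sub (hsub f hf x hx) (hφc.intervalIntegrable s x)).symm
    rw [h1]
    exact le_trans (primitive_abs_le hst (hf.sub (hφc.intervalIntegrable s t)) hx) hφerr
  have hGΨ : ∀ x ∈ Icc s t, |G x - Ψ x| ≤ ε := by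
    intro x hx
    have h1 : G x - Ψ x = ∫ y in s..x, (g y - ψ y) :=
      (integral_sub (hsub g hg x hx) (hψc.intervalIntegrable s x)).symm
    rw [h1]
    exact le_trans (primitive_abs_le hst (hg.sub (hψc.intervalIntegrable s t)) hx) hψerr
  have hΦbd : ∀ x ∈ Icc s t, |Φ x| ≤ If + 1 := by
    intro x hx
    have h1 := hFΦ x hx; have h2 := hFbd x hx
    have : |Φ x| ≤ |F x| + |F x - Φ x| := by
      calc |Φ x| = |F x - (F x - Φ x)| := by ring_nf
        _ ≤ |F x| + |F x - Φ x| := abs_sub _ _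
    linarith
  have hΨbd : ∀ x ∈ Icc s t, |Ψ x| ≤ Ig + 1 := by
    intro x hx
    have h1 := hGΨ x hx; have h2 := hGbd x hx
    have : |Ψ x| ≤ |G x| + |G x - Ψ x| := by
      calc |Ψ x| = |G x - (G x - Ψ x)| := by ring_nf
        _ ≤ |G x| + |G x - Ψ x| := abs_sub _ _
    linarith
  have hφint : (∫ x in s..t, |φ x|) ≤ If + ε := by
    have h1 : ∀ x ∈ Icc s t, |φ x| ≤ |f x| + |f x - φ x| := by
      intro x _
      calc |φ x| = |f x - (f x - φ x)| := by ring_nf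
        _ ≤ |f x| + |f x - φ x| := abs_sub _ _
    calc (∫ x in s..t, |φ x|) ≤ ∫ x in s..t, (|f x| + |f x - φ x|) :=
          integral_mono_on hst (hφc.abs.intervalIntegrable s t)
            (hf.abs.add ((hf.sub (hφc.intervalIntegrable s t)).abs)) h1
      _ = If + ∫ x in s..t, |f x - φ x| :=
          integral_add hf.abs ((hf.sub (hφc.intervalIntegrable s t)).abs)
      _ ≤ If + ε := by linarith
  have hψint : (∫ x in s..t, |ψ x|) ≤ Ig + ε := by
    have h1 : ∀ x ∈ Icc s t, |ψ x| ≤ |g x| + |g x - ψ x| := by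
      intro x _
      calc |ψ x| = |g x - (g x - ψ x)| := by ring_nf
        _ ≤ |g x| + |g x - ψ x| := abs_sub _ _
    calc (∫ x in s..t, |ψ x|) ≤ ∫ x in s..t, (|g x| + |g x - ψ x|) :=
          integral_mono_on hst (hψc.abs.intervalIntegrable s t)
            (hg.abs.add ((hg.sub (hψc.intervalIntegrable s t)).abs)) h1
      _ = Ig + ∫ x in s..t, |g x - ψ x| :=
          integral_add hg.abs ((hg.sub (hψc.intervalIntegrable s t)).abs)
      _ ≤ Ig + ε := by linarith
  -- exact identity for the approximations
  have hexact := prod_rule_continuous hφc hψc s t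
  -- integrability facts
  have hi_fG : IntervalIntegrable (fun x => f x * G x) volume s t :=
    hf.mul_continuousOn (by rwa [Set.uIcc_of_le hst])
  have hi_gF : IntervalIntegrable (fun x => g x * F x) volume s t :=
    hg.mul_continuousOn (by rwa [Set.uIcc_of_le hst])
  have hi_φΨ : IntervalIntegrable (fun x => φ x * Ψ x) volume s t :=
    (hφc.mul hΨc).intervalIntegrable s t
  have hi_ψΦ : IntervalIntegrable (fun x => ψ x * Φ x) volume s t :=
    (hψc.mul hΦc).intervalIntegrable s t
  -- decompose the difference of the two integrals
  have hd1 : |(∫ x in s..t, f x * G x) - ∫ x in s..t, φ x * Ψ x|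
      ≤ Ig * ε + (If + 1) * ε := by
    have hsplit : (∫ x in s..t, f x * G x) - ∫ x in s..t, φ x * Ψ x
        = (∫ x in s..t, (f x - φ x) * G x) + ∫ x in s..t, φ x * (G x - Ψ x) := by
      rw [← integral_add
        ((hf.sub (hφc.intervalIntegrable s t)).mul_continuousOn (by rwa [Set.uIcc_of_le hst]))
        ((hφc.intervalIntegrable s t).mul_continuousOn
          (by rw [Set.uIcc_of_le hst]; exact hGc.sub hΨc.continuousOn)),
        ← integral_sub hi_fG hi_φΨ]
      congr 1; funext x; ring
    rw [hsplit]
    have e1 : |∫ x in s..t, (f x - φ x) * G x| ≤ Ig * ε := by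
      have := integral_mul_le_of_bound hst (hf.sub (hφc.intervalIntegrable s t)) hGc hGbd
      refine le_trans this ?_
      exact mul_le_mul_of_nonneg_left hφerr hIg0
    have e2 : |∫ x in s..t, φ x * (G x - Ψ x)| ≤ (If + 1) * ε := by
      have hbnd : ∀ x ∈ Icc s t, |G x - Ψ x| ≤ ε := hGΨ
      have := integral_mul_le_of_bound hst (hφc.intervalIntegrable s t)
        (hGc.sub hΨc.continuousOn) hbnd
      refine le_trans this ?_
      have := hφint
      nlinarith
    calc |(∫ x in s..t, (f x - φ x) * G x) + ∫ x in s..t, φ x * (G x - Ψ x)|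
        ≤ |∫ x in s..t, (f x - φ x) * G x| + |∫ x in s..t, φ x * (G x - Ψ x)| := abs_add_le _ _
      _ ≤ Ig * ε + (If + 1) * ε := add_le_add e1 e2
  have hd2 : |(∫ x in s..t, g x * F x) - ∫ x in s..t, ψ x * Φ x|
      ≤ If * ε + (Ig + 1) * ε := by
    have hsplit : (∫ x in s..t, g x * F x) - ∫ x in s..t, ψ x * Φ x
        = (∫ x in s..t, (g x - ψ x) * F x) + ∫ x in s..t, ψ x * (F x - Φ x) := by
      rw [← integral_add
        ((hg.sub (hψc.intervalIntegrable s t)).mul_continuousOn (by rwa [Set.uIcc_of_le hst]))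
        ((hψc.intervalIntegrable s t).mul_continuousOn
          (by rw [Set.uIcc_of_le hst]; exact hFc.sub hΦc.continuousOn)),
        ← integral_sub hi_gF hi_ψΦ]
      congr 1; funext x; ring
    rw [hsplit]
    have e1 : |∫ x in s..t, (g x - ψ x) * F x| ≤ If * ε := by
      have := integral_mul_le_of_bound hst (hg.sub (hψc.intervalIntegrable s t)) hFc hFbd
      refine le_trans this ?_
      exact mul_le_mul_of_nonneg_left hψerr hIf0
    have e2 : |∫ x in s..t, ψ x * (F x - Φ x)| ≤ (Ig + 1) * ε := by
      have := integral_mul_le_of_bound hst (hψc.intervalIntegrable s t)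
        (hFc.sub hΦc.continuousOn) hFΦ
      refine le_trans this ?_
      have := hψint
      nlinarith
    calc |(∫ x in s..t, (g x - ψ x) * F x) + ∫ x in s..t, ψ x * (F x - Φ x)|
        ≤ |∫ x in s..t, (g x - ψ x) * F x| + |∫ x in s..t, ψ x * (F x - Φ x)| := abs_add_le _ _
      _ ≤ If * ε + (Ig + 1) * ε := add_le_add e1 e2
  have hd3 : |Φ t * Ψ t - F t * G t| ≤ (If + 1) * ε + Ig * ε := by
    have h1 : Φ t * Ψ t - F t * G t = Φ t * (Ψ t - G t) + G t * (Φ t - F t) := by ring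
    rw [h1]
    have e1 : |Φ t * (Ψ t - G t)| ≤ (If + 1) * ε := by
      rw [abs_mul]
      have := hΨbd t hts
      have h2 : |Ψ t - G t| ≤ ε := by rw [abs_sub_comm]; exact hGΨ t hts
      have := hΦbd t hts
      nlinarith [abs_nonneg (Φ t), abs_nonneg (Ψ t - G t)]
    have e2 : |G t * (Φ t - F t)| ≤ Ig * ε := by
      rw [abs_mul]
      have := hGbd t hts
      have h2 : |Φ t - F t| ≤ ε := by rw [abs_sub_comm]; exact hFΦ t hts
      nlinarith [abs_nonneg (G t), abs_nonneg (Φ t - F t)]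
    calc |Φ t * (Ψ t - G t) + G t * (Φ t - F t)|
        ≤ |Φ t * (Ψ t - G t)| + |G t * (Φ t - F t)| := abs_add_le _ _
      _ ≤ (If + 1) * ε + Ig * ε := add_le_add e1 e2
  -- assemble
  have hsum : ∫ x in s..t, (f x * G x + g x * F x)
      = (∫ x in s..t, f x * G x) + ∫ x in s..t, g x * F x := integral_add hi_fG hi_gF
  have hsumφ : ∫ x in s..t, (φ x * Ψ x + ψ x * Φ x)
      = (∫ x in s..t, φ x * Ψ x) + ∫ x in s..t, ψ x * Φ x := integral_add hi_φΨ hi_ψΦ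
  have hkey : (∫ x in s..t, (f x * G x + g x * F x)) - F t * G t
      = (((∫ x in s..t, f x * G x) - ∫ x in s..t, φ x * Ψ x)
        + ((∫ x in s..t, g x * F x) - ∫ x in s..t, ψ x * Φ x))
        + (Φ t * Ψ t - F t * G t) := by
    rw [hsum]
    have : (∫ x in s..t, (φ x * Ψ x + ψ x * Φ x)) = Φ t * Ψ t := hexact
    rw [hsumφ] at this
    linarith
  rw [hkey]
  have habs := abs_add_le (((∫ x in s..t, f x * G x) - ∫ x in s..t, φ x * Ψ x)
        + ((∫ x in s..t, g x * F x) - ∫ x in s..t, ψ x * Φ x)) (Φ t * Ψ t - F t * G t)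
  have habs2 := abs_add_le ((∫ x in s..t, f x * G x) - ∫ x in s..t, φ x * Ψ x)
        ((∫ x in s..t, g x * F x) - ∫ x in s..t, ψ x * Φ x)
  calc _ ≤ _ := habs
    _ ≤ (3 * (If + Ig) + 6) * ε := by nlinarith


lemma gronwall_id {α w2 w2' : ℝ → ℝ} {s t : ℝ} (hst : s ≤ t)
    (hα : IntervalIntegrable α volume s t)
    (hw : IntervalIntegrable w2' volume s t)
    (hrep : ∀ x ∈ Icc s t, w2 x - w2 s = ∫ y in s..x, w2' y) :
    Real.exp (∫ u in s..t, α u) * w2 t - w2 s =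
      ∫ x in s..t, (w2' x + α x * w2 x) * Real.exp (∫ u in s..x, α u) := by
  set E : ℝ → ℝ := fun x => Real.exp (∫ u in s..x, α u) with hEdef
  have hEc : ContinuousOn E (Set.uIcc s t) :=
    Real.continuous_exp.comp_continuousOn (continuousOn_primitive_interval' hα left_mem_uIcc)
  have hEc' : ContinuousOn E (Icc s t) := by rwa [Set.uIcc_of_le hst] at hEc
  set g : ℝ → ℝ := fun x => α x * E x with hgdef
  have hg_int : IntervalIntegrable g volume s t := hα.mul_continuousOn hEc
  have hsubα : ∀ x ∈ Icc s t, IntervalIntegrable α volume s x := fun x hx =>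
    hα.mono_set (by rw [Set.uIcc_of_le hst, Set.uIcc_of_le hx.1]; exact Icc_subset_Icc le_rfl hx.2)
  have hG : ∀ x ∈ Icc s t, E x = 1 + ∫ y in s..x, g y := fun x hx =>
    exp_primitive_eq hx.1 (hsubα x hx)
  -- continuity of w2 on [s, t]
  have hw2c : ContinuousOn w2 (Icc s t) := by
    have h1 : ContinuousOn (fun x => w2 s + ∫ y in s..x, w2' y) (Icc s t) := by
      refine continuousOn_const.add ?_
      have := continuousOn_primitive_interval' hw (left_mem_uIcc (a := s) (b := t))
      rwa [Set.uIcc_of_le hst] at this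
    refine h1.congr fun x hx => ?_
    have := hrep x hx
    linarith
  -- product rule
  have hPR := prod_rule hst hw hg_int
  -- rewrite the target integral
  have hi1 : IntervalIntegrable (fun x => w2' x * (∫ y in s..x, g y)) volume s t := by
    refine hw.mul_continuousOn ?_
    rw [Set.uIcc_of_le hst]
    have := continuousOn_primitive_interval' hg_int (left_mem_uIcc (a := s) (b := t))
    rwa [Set.uIcc_of_le hst] at this
  have hi2 : IntervalIntegrable (fun x => g x * (∫ y in s..x, w2' y)) volume s t := by
    refine hg_int.mul_continuousOn ?_
    rw [Set.uIcc_of_le hst]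
    have := continuousOn_primitive_interval' hw (left_mem_uIcc (a := s) (b := t))
    rwa [Set.uIcc_of_le hst] at this
  have hi3 : IntervalIntegrable
      (fun x => w2' x * (∫ y in s..x, g y) + g x * (∫ y in s..x, w2' y)) volume s t :=
    hi1.add hi2
  have hi4 : IntervalIntegrable (fun x => w2' x + w2 s * g x) volume s t :=
    hw.add (hg_int.const_mul _)
  have hkey : ∫ x in s..t, (w2' x + α x * w2 x) * E x
      = (∫ x in s..t, (w2' x * (∫ y in s..x, g y) + g x * (∫ y in s..x, w2' y)))
        + ∫ x in s..t, (w2' x + w2 s * g x) := by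
    rw [← integral_add hi3 hi4]
    refine integral_congr fun x hx => ?_
    rw [Set.uIcc_of_le hst] at hx
    have hEx : E x = 1 + ∫ y in s..x, g y := hG x hx
    have hFx : w2 x - w2 s = ∫ y in s..x, w2' y := hrep x hx
    have h1 : (∫ y in s..x, g y) = E x - 1 := by linarith
    have h2 : (∫ y in s..x, w2' y) = w2 x - w2 s := hFx.symm
    rw [h1, h2, hgdef]
    ring
  have hsum2 : ∫ x in s..t, (w2' x + w2 s * g x)
      = (∫ x in s..t, w2' x) + w2 s * ∫ x in s..t, g x := by
    rw [integral_add hw (hg_int.const_mul _), intervalIntegral.integral_const_mul]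
  have hFt : w2 t - w2 s = ∫ y in s..t, w2' y := hrep t ⟨hst, le_rfl⟩
  have hGt : E t = 1 + ∫ y in s..t, g y := hG t ⟨hst, le_rfl⟩
  rw [hkey, hPR, hsum2]
  have h1 : (∫ y in s..t, w2' y) = w2 t - w2 s := hFt.symm
  have h2 : (∫ y in s..t, g y) = E t - 1 := by linarith
  rw [h1, h2]
  ring

end DetProj
set_option maxHeartbeats 1000000 in
/-- Core step of the 2D determining-projection theorem. -/
theorem determining_projection_2d_core
    (ν C₁ γ N T : ℝ) (hν : 0 < ν) (hC₁ : 0 < C₁) (hγ : 0 < γ) (hN : 1 ≤ N) (hT : 0 < T)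
    (w2 w2' nu fg Rw : ℝ → ℝ)
    (hw2_nonneg : ∀ t, 0 < t → 0 ≤ w2 t)
    (hw2_int : ∀ s t, 0 < s → s ≤ t → IntervalIntegrable w2' volume s t)
    (hw2_ac : ∀ s t, 0 < s → s ≤ t → w2 t - w2 s = ∫ τ in s..t, w2' τ)
    (hnu_loc : LocallyIntegrableOn (fun t => nu t ^ 2) (Set.Ioi 0))
    (hineq : ∀ᵐ t ∂volume, t ∈ Set.Ioi (0:ℝ) →
      w2' t + (ν * N ^ (2 * γ) / (2 * C₁ ^ 2) - (2 / ν) * nu t ^ 2) * w2 t ≤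
        (2 / ν) * fg t ^ 2 + (ν * N ^ (2 * γ) / C₁ ^ 2) * Rw t ^ 2)
    (hfg : Tendsto fg atTop (nhds 0))
    (hRw : Tendsto Rw atTop (nhds 0))
    (hbdd : IsBoundedUnder (· ≤ ·) atTop (fun t => (1 / T) * ∫ τ in t..(t + T), nu τ ^ 2))
    (hNlarge : (4 * C₁ ^ 2 / ν ^ 2) *
        limsup (fun t => (1 / T) * ∫ τ in t..(t + T), nu τ ^ 2) atTop < N ^ (2 * γ)) :
    Tendsto (fun t => Real.sqrt (w2 t)) atTop (nhds 0) := by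
  -- constants
  set K : ℝ := ν * N ^ (2 * γ) / (2 * C₁ ^ 2) with hKdef
  have hNpos : (0:ℝ) < N ^ (2 * γ) := Real.rpow_pos_of_pos (lt_of_lt_of_le one_pos hN) _
  have hK : 0 < K := by positivity
  set b : ℝ → ℝ := fun u => (2 / ν) * nu u ^ 2 with hbdef
  have hb0 : ∀ u, 0 ≤ b u := fun u => by positivity
  set α : ℝ → ℝ := fun u => K - b u with hαdef
  set β : ℝ → ℝ := fun u => (2 / ν) * fg u ^ 2 + (ν * N ^ (2 * γ) / C₁ ^ 2) * Rw u ^ 2 with hβdef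
  have hβ0 : ∀ u, 0 ≤ β u := fun u => by positivity
  set L : ℝ := limsup (fun t => (1 / T) * ∫ τ in t..(t + T), nu τ ^ 2) atTop with hLdef
  have hL0 : 0 ≤ L := by
    refine le_limsup_of_frequently_le (Frequently.of_forall fun x => ?_) hbdd
    have : 0 ≤ ∫ τ in x..(x + T), nu τ ^ 2 :=
      intervalIntegral.integral_nonneg (by linarith) (fun u _ => sq_nonneg _)
    positivity
  have hKL : (2 / ν) * L < K := by
    have h1 : (0:ℝ) < ν / (2 * C₁ ^ 2) := by positivity
    have h2 := (mul_lt_mul_iff_right₀ h1).2 hNlarge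
    have h3 : ν / (2 * C₁ ^ 2) * (4 * C₁ ^ 2 / ν ^ 2 * L) = 2 / ν * L := by
      field_simp; ring
    have h4 : ν / (2 * C₁ ^ 2) * N ^ (2 * γ) = K := by rw [hKdef]; ring
    rw [h3, h4] at h2
    exact h2
  set δ : ℝ := (K - (2 / ν) * L) / 2 with hδdef
  have hδ : 0 < δ := by simp only [hδdef]; linarith
  have hKδ : 0 < K - δ := by
    have : 0 ≤ (2 / ν) * L := by positivity
    simp only [hδdef]; linarith
  set C₀ : ℝ := (K - δ) * T with hC₀def
  have hC₀ : 0 < C₀ := by positivity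
  -- eventual window bound
  have hLlt : L < ν * (K - δ) / 2 := by
    have h2 : (2 / ν) * L < K - δ := by simp only [hδdef]; linarith
    have h3 := mul_lt_mul_of_pos_left h2 (by positivity : (0:ℝ) < ν / 2)
    have h4 : ν / 2 * ((2 / ν) * L) = L := by field_simp
    have h5 : ν / 2 * (K - δ) = ν * (K - δ) / 2 := by ring
    rw [h4, h5] at h3
    exact h3
  have hev : ∀ᶠ x in atTop, (1 / T) * ∫ τ in x..(x + T), nu τ ^ 2 < ν * (K - δ) / 2 :=
    Filter.eventually_lt_of_limsup_lt hLlt hbdd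
  obtain ⟨t₁, ht₁⟩ := Filter.eventually_atTop.1 hev
  set t₀ : ℝ := max t₁ 1 with ht₀def
  have ht₀pos : (0:ℝ) < t₀ := lt_of_lt_of_le one_pos (le_max_right _ _)
  -- integrability of b and α on subintervals of [t₀, ∞)
  have hbint : ∀ p q, t₀ ≤ p → p ≤ q → IntervalIntegrable b volume p q := by
    intro p q hp hpq
    have hsub : Icc p q ⊆ Set.Ioi (0:ℝ) := fun x hx =>
      lt_of_lt_of_le (lt_of_lt_of_le ht₀pos hp) hx.1
    have h1 : IntegrableOn (fun u => nu u ^ 2) (Icc p q) volume :=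
      hnu_loc.integrableOn_compact_subset hsub isCompact_Icc
    have h2 : IntervalIntegrable (fun u => nu u ^ 2) volume p q :=
      (intervalIntegrable_iff_integrableOn_Icc_of_le hpq).2 h1
    exact h2.const_mul _
  have hαint : ∀ p q, t₀ ≤ p → p ≤ q → IntervalIntegrable α volume p q := fun p q hp hpq =>
    intervalIntegrable_const.sub (hbint p q hp hpq)
  -- single window bound
  have hwin1 : ∀ τ, t₀ ≤ τ → (∫ u in τ..(τ + T), b u) ≤ (K - δ) * T := by
    intro τ hτ
    have h1 : (1 / T) * ∫ x in τ..(τ + T), nu x ^ 2 < ν * (K - δ) / 2 :=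
      ht₁ τ (le_trans (le_max_left _ _) hτ)
    have h2 : (∫ u in τ..(τ + T), b u) = (2 / ν) * ∫ x in τ..(τ + T), nu x ^ 2 :=
      intervalIntegral.integral_const_mul _ _
    have h3 : (∫ x in τ..(τ + T), nu x ^ 2) = T * ((1 / T) * ∫ x in τ..(τ + T), nu x ^ 2) := by
      field_simp
    rw [h2, h3]
    have h4 : T * ((1 / T) * ∫ x in τ..(τ + T), nu x ^ 2) ≤ T * (ν * (K - δ) / 2) :=
      mul_le_mul_of_nonneg_left h1.le hT.le
    calc (2 / ν) * (T * ((1 / T) * ∫ x in τ..(τ + T), nu x ^ 2))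
        ≤ (2 / ν) * (T * (ν * (K - δ) / 2)) := mul_le_mul_of_nonneg_left h4 (by positivity)
      _ = (K - δ) * T := by field_simp
  -- n-window bound
  have hwinn : ∀ n : ℕ, ∀ τ, t₀ ≤ τ → (∫ u in τ..(τ + n * T), b u) ≤ n * ((K - δ) * T) := by
    intro n
    induction n with
    | zero => intro τ _; simp
    | succ n ih =>
      intro τ hτ
      have hsplit : (∫ u in τ..(τ + T), b u) + (∫ u in (τ + T)..(τ + (n + 1 : ℕ) * T), b u)
          = ∫ u in τ..(τ + (n + 1 : ℕ) * T), b u := by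
        refine intervalIntegral.integral_add_adjacent_intervals
          (hbint τ (τ + T) hτ (by linarith)) (hbint (τ + T) _ (by linarith) ?_)
        push_cast
        nlinarith [n.cast_nonneg (α := ℝ)]
      have h2 : (∫ u in (τ + T)..(τ + (n + 1 : ℕ) * T), b u) ≤ n * ((K - δ) * T) := by
        have : τ + (n + 1 : ℕ) * T = (τ + T) + n * T := by push_cast; ring
        rw [this]
        exact ih (τ + T) (by linarith)
      have h1 := hwin1 τ hτ
      push_cast
      push_cast at h2 hsplit
      linarith
  -- general window bound
  have hwin : ∀ τ x, t₀ ≤ τ → τ ≤ x → (∫ u in τ..x, b u) ≤ (K - δ) * (x - τ) + C₀ := by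
    intro τ x hτ hτx
    set n : ℕ := ⌈(x - τ) / T⌉₊ with hn
    have hn1 : x ≤ τ + n * T := by
      have := Nat.le_ceil ((x - τ) / T)
      have := (div_le_iff₀ hT).1 this
      linarith
    have hn2 : (n : ℝ) * T ≤ (x - τ) + T := by
      have h := Nat.ceil_lt_add_one (div_nonneg (by linarith : (0:ℝ) ≤ x - τ) hT.le)
      have h2 := mul_le_mul_of_nonneg_right h.le hT.le
      rw [add_mul, div_mul_cancel₀ _ (ne_of_gt hT), one_mul] at h2
      exact h2
    have h1 : (∫ u in τ..x, b u) ≤ ∫ u in τ..(τ + n * T), b u :=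
      intervalIntegral.integral_mono_interval le_rfl hτx hn1
        (ae_of_all _ fun u => hb0 u) (hbint τ _ hτ (by linarith))
    have h2 := hwinn n τ hτ
    have h3 : (n : ℝ) * ((K - δ) * T) ≤ (K - δ) * ((x - τ) + T) := by
      have : (n : ℝ) * ((K - δ) * T) = (K - δ) * ((n : ℝ) * T) := by ring
      rw [this]
      exact mul_le_mul_of_nonneg_left hn2 hKδ.le
    simp only [hC₀def]
    calc (∫ u in τ..x, b u) ≤ (n : ℝ) * ((K - δ) * T) := le_trans h1 h2
      _ ≤ (K - δ) * ((x - τ) + T) := h3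
      _ = (K - δ) * (x - τ) + (K - δ) * T := by ring
  -- lower bound on ∫ α
  have hA : ∀ τ x, t₀ ≤ τ → τ ≤ x → δ * (x - τ) - C₀ ≤ ∫ u in τ..x, α u := by
    intro τ x hτ hτx
    have h1 : (∫ u in τ..x, α u) = K * (x - τ) - ∫ u in τ..x, b u := by
      rw [hαdef]
      rw [intervalIntegral.integral_sub intervalIntegrable_const (hbint τ x hτ hτx),
        intervalIntegral.integral_const, smul_eq_mul, mul_comm]
    have h2 := hwin τ x hτ hτx
    rw [h1]
    nlinarith
  -- reduce to w2 → 0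
  suffices hw2lim : Tendsto w2 atTop (nhds 0) by
    have h1 : Tendsto (fun x : ℝ => Real.sqrt x) (nhds 0) (nhds (Real.sqrt 0)) :=
      Real.continuous_sqrt.continuousAt
    rw [Real.sqrt_zero] at h1
    exact h1.comp hw2lim
  -- β tends to zero
  have hβlim : Tendsto β atTop (nhds 0) := by
    have h1 := hfg.mul hfg
    have h2 := hRw.mul hRw
    rw [mul_zero] at h1 h2
    have h3 := (h1.const_mul (2 / ν)).add (h2.const_mul (ν * N ^ (2 * γ) / C₁ ^ 2))
    rw [mul_zero, mul_zero, add_zero] at h3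
    refine h3.congr fun u => ?_
    simp only [hβdef]
    ring
  rw [tendsto_order]
  constructor
  · intro a ha
    filter_upwards [Filter.eventually_ge_atTop (1:ℝ)] with x hx
    exact lt_of_lt_of_le ha (hw2_nonneg x (by linarith))
  intro ε hε
  -- choose the starting time s
  set c : ℝ := ε * δ / (4 * Real.exp C₀) with hcdef
  have hc : 0 < c := by positivity
  have hβev : ∀ᶠ x in atTop, β x < c := hβlim.eventually_lt_const hc
  obtain ⟨s, hs⟩ := Filter.eventually_atTop.1 (hβev.and (Filter.eventually_ge_atTop t₀))
  have hst₀ : t₀ ≤ s := (hs s le_rfl).2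
  have hs0 : 0 < s := lt_of_lt_of_le ht₀pos hst₀
  -- main Gronwall estimate for t ≥ s
  have hmain : ∀ t, s ≤ t →
      w2 t ≤ w2 s * Real.exp (C₀ - δ * (t - s)) + ε / 4 := by
    intro t hstt
    set A : ℝ → ℝ := fun x => ∫ u in s..x, α u with hAdef
    set E : ℝ → ℝ := fun x => Real.exp (A x) with hEdefn
    have hα_st : IntervalIntegrable α volume s t := hαint s t hst₀ hstt
    have hw_st : IntervalIntegrable w2' volume s t := hw2_int s t hs0 hstt
    have hrep : ∀ x ∈ Set.Icc s t, w2 x - w2 s = ∫ y in s..x, w2' y := fun x hx =>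
      hw2_ac s x hs0 hx.1
    have hid := DetProj.gronwall_id hstt hα_st hw_st hrep
    -- continuity facts
    have hEc : ContinuousOn E (Set.uIcc s t) :=
      Real.continuous_exp.comp_continuousOn
        (intervalIntegral.continuousOn_primitive_interval' hα_st Set.left_mem_uIcc)
    have hEc' : ContinuousOn E (Set.Icc s t) := by rwa [Set.uIcc_of_le hstt] at hEc
    have hw2c : ContinuousOn w2 (Set.uIcc s t) := by
      rw [Set.uIcc_of_le hstt]
      have h1 : ContinuousOn (fun x => w2 s + ∫ y in s..x, w2' y) (Set.Icc s t) := by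
        refine continuousOn_const.add ?_
        have := intervalIntegral.continuousOn_primitive_interval' hw_st
          (Set.left_mem_uIcc (a := s) (b := t))
        rwa [Set.uIcc_of_le hstt] at this
      refine h1.congr fun x hx => ?_
      have := hrep x hx
      linarith
    -- integrability of the two integrands
    have hint1 : IntervalIntegrable (fun x => (w2' x + α x * w2 x) * E x) volume s t := by
      have heq : (fun x => (w2' x + α x * w2 x) * E x)
          = fun x => w2' x * E x + α x * (w2 x * E x) := by funext x; ring
      rw [heq]
      exact (hw_st.mul_continuousOn hEc).add
        (hα_st.mul_continuousOn (hw2c.mul (by rwa [Set.uIcc_of_le hstt])))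
    have hint2 : IntervalIntegrable (fun x => c * E x) volume s t :=
      (hEc.intervalIntegrable).const_mul _
    -- a.e. bound
    have hae : (fun x => (w2' x + α x * w2 x) * E x)
        ≤ᵐ[volume.restrict (Set.Icc s t)] fun x => c * E x := by
      have h1 : ∀ᵐ x ∂(volume.restrict (Set.Icc s t)), x ∈ Set.Ioi (0:ℝ) →
          w2' x + (ν * N ^ (2 * γ) / (2 * C₁ ^ 2) - (2 / ν) * nu x ^ 2) * w2 x ≤
            (2 / ν) * fg x ^ 2 + (ν * N ^ (2 * γ) / C₁ ^ 2) * Rw x ^ 2 :=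
        ae_restrict_of_ae hineq
      have h2 : ∀ᵐ x ∂(volume.restrict (Set.Icc s t)), x ∈ Set.Icc s t :=
        ae_restrict_mem measurableSet_Icc
      filter_upwards [h1, h2] with x hx1 hx2
      have hx0 : x ∈ Set.Ioi (0:ℝ) := lt_of_lt_of_le hs0 hx2.1
      have h3 : w2' x + α x * w2 x ≤ β x := hx1 hx0
      have h4 : β x ≤ c := ((hs x hx2.1).1).le
      have h5 : 0 ≤ E x := (Real.exp_pos _).le
      calc (w2' x + α x * w2 x) * E x ≤ β x * E x := mul_le_mul_of_nonneg_right h3 h5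
        _ ≤ c * E x := mul_le_mul_of_nonneg_right h4 h5
    have hineq2 : E t * w2 t - w2 s ≤ c * ∫ x in s..t, E x := by
      have := intervalIntegral.integral_mono_ae_restrict hstt hint1 hint2 hae
      rw [intervalIntegral.integral_const_mul] at this
      calc E t * w2 t - w2 s = ∫ x in s..t, (w2' x + α x * w2 x) * E x := hid
        _ ≤ c * ∫ x in s..t, E x := this
    -- bound E t from below
    have hEt : Real.exp (δ * (t - s) - C₀) ≤ E t := Real.exp_le_exp.2 (hA s t hst₀ hstt)
    have hEtpos : 0 < E t := Real.exp_pos _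
    -- bound (∫ E) / E t
    have hratio : (∫ x in s..t, E x) / E t ≤ Real.exp C₀ / δ := by
      have hEdiv : (∫ x in s..t, E x) / E t = ∫ x in s..t, E x / E t := by
        rw [intervalIntegral.integral_div]
      rw [hEdiv]
      have hptwise : ∀ x ∈ Set.Icc s t, E x / E t ≤ Real.exp (C₀ - δ * (t - x)) := by
        intro x hx
        have hadd : A x + (∫ u in x..t, α u) = A t :=
          intervalIntegral.integral_add_adjacent_intervals
            (hαint s x hst₀ hx.1) (hαint x t (le_trans hst₀ hx.1) hx.2)
        have hlow : δ * (t - x) - C₀ ≤ ∫ u in x..t, α u :=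
          hA x t (le_trans hst₀ hx.1) hx.2
        have : E x / E t = Real.exp (A x - A t) := by
          rw [hEdefn, Real.exp_sub]
        rw [this]
        refine Real.exp_le_exp.2 ?_
        linarith
      have hi1 : IntervalIntegrable (fun x => E x / E t) volume s t :=
        (hEc.div_const (E t)).intervalIntegrable
      have hcont2 : Continuous (fun x : ℝ => Real.exp (C₀ - δ * (t - x))) :=
        Real.continuous_exp.comp
          (continuous_const.sub (continuous_const.mul (continuous_const.sub continuous_id)))
      have hi2 : IntervalIntegrable (fun x => Real.exp (C₀ - δ * (t - x))) volume s t :=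
        hcont2.intervalIntegrable s t
      have hmono := intervalIntegral.integral_mono_on hstt hi1 hi2 hptwise
      refine le_trans hmono ?_
      -- compute ∫ exp(C₀ - δ(t - x)) dx
      have hder : ∀ x ∈ Set.uIcc s t, HasDerivAt
          (fun u => Real.exp (C₀ - δ * (t - u)) / δ) (Real.exp (C₀ - δ * (t - x))) x := by
        intro x _
        have h1 : HasDerivAt (fun u : ℝ => C₀ - δ * (t - u)) δ x := by
          have h2 : (fun u : ℝ => C₀ - δ * (t - u)) = fun u => δ * u + (C₀ - δ * t) := by
            funext u; ring
          rw [h2]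
          simpa using ((hasDerivAt_id x).const_mul δ).add_const (C₀ - δ * t)
        have h3 := (h1.exp).div_const δ
        exact h3.congr_deriv (by rw [mul_div_assoc, div_self hδ.ne', mul_one])
      have hftc := intervalIntegral.integral_eq_sub_of_hasDerivAt hder hi2
      rw [hftc]
      have h4 : Real.exp (C₀ - δ * (t - t)) / δ = Real.exp C₀ / δ := by
        norm_num
      rw [h4]
      have h5 : 0 < Real.exp (C₀ - δ * (t - s)) / δ := by positivity
      linarith
    -- conclude
    have hw2t : w2 t ≤ w2 s / E t + c * ((∫ x in s..t, E x) / E t) := by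
      have h1 : E t * w2 t ≤ w2 s + c * ∫ x in s..t, E x := by linarith
      have h2 : w2 t ≤ (w2 s + c * ∫ x in s..t, E x) / E t := by
        rw [le_div_iff₀ hEtpos, mul_comm]
        exact h1
      calc w2 t ≤ (w2 s + c * ∫ x in s..t, E x) / E t := h2
        _ = w2 s / E t + c * ((∫ x in s..t, E x) / E t) := by ring
    have hfirst : w2 s / E t ≤ w2 s * Real.exp (C₀ - δ * (t - s)) := by
      have hw2s : 0 ≤ w2 s := hw2_nonneg s hs0
      have h1 : w2 s / E t ≤ w2 s / Real.exp (δ * (t - s) - C₀) :=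
        div_le_div_of_nonneg_left hw2s (Real.exp_pos _) hEt
      have hprod : Real.exp (C₀ - δ * (t - s)) * Real.exp (δ * (t - s) - C₀) = 1 := by
        rw [← Real.exp_add]
        ring_nf
        exact Real.exp_zero
      refine le_trans h1 (le_of_eq ?_)
      rw [div_eq_iff (Real.exp_pos _).ne', mul_assoc, hprod, mul_one]
    have hsecond : c * ((∫ x in s..t, E x) / E t) ≤ ε / 4 := by
      have h1 : c * ((∫ x in s..t, E x) / E t) ≤ c * (Real.exp C₀ / δ) :=
        mul_le_mul_of_nonneg_left hratio hc.le
      refine le_trans h1 (le_of_eq ?_)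
      rw [hcdef]
      field_simp
    linarith
  -- finish: the decaying term is eventually small
  have hdecay : Tendsto (fun t : ℝ => w2 s * Real.exp (C₀ - δ * (t - s))) atTop (nhds 0) := by
    have h0 : Tendsto (fun t : ℝ => δ * (t - s)) atTop atTop := by
      apply Filter.Tendsto.const_mul_atTop hδ
      have := tendsto_atTop_add_const_right atTop (-s) (tendsto_id (α := ℝ))
      refine this.congr fun x => ?_
      simp only [id_eq]
      ring
    have h1 : Tendsto (fun t : ℝ => C₀ - δ * (t - s)) atTop atBot := by
      have h2 : Tendsto (fun t : ℝ => -(δ * (t - s))) atTop atBot :=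
        tendsto_neg_atTop_atBot.comp h0
      have h3 := tendsto_atBot_add_const_left atTop C₀ h2
      refine h3.congr fun x => ?_
      ring
    have h4 := (Real.tendsto_exp_atBot.comp h1).const_mul (w2 s)
    rw [mul_zero] at h4
    exact h4.congr fun x => rfl
  have hdecsmall : ∀ᶠ t in atTop, w2 s * Real.exp (C₀ - δ * (t - s)) < ε / 2 :=
    hdecay.eventually_lt_const (by linarith)
  filter_upwards [hdecsmall, Filter.eventually_ge_atTop s] with t h1 h2
  have := hmain t h2
  linarith
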